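/- arXiv:1811.05802 — 7 statements merged into one kernel-verified Lean document; each statement's English description precedes it below -/
import Mathlib

section
/- With P_n defined as the weak operator limit of K(σ_m^n) as m → ∞ (where σ_m^n = (n+1, n+m+1)···(n+m, n+2m)), the operator P_n satisfies P_n² = P_n; combined with self-adjointness, P_n is an orthogonal projection. -/
open MeasureTheory Filter Topology
open scoped InnerProductSpace

/-- The pointwise stabilizer `S(n,∞)` of the first `n` natural numbers inside the full
symmetric group of `ℕ` (all bijections of `ℕ`). -/
def stabSet (n : ℕ) : Set (Equiv.Perm ℕ) := {s | ∀ i < n, s i = i}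

/-- `σ_m^n`, the product of the disjoint transpositions `(n+j, n+m+j)` for `j = 0,…,m-1`. -/
def sigmaPerm (n m : ℕ) : Equiv.Perm ℕ :=
  ((List.range m).map fun j => Equiv.swap (n + j) (n + m + j)).prod

lemma list_prod_fixed (l : List (Equiv.Perm ℕ)) (x : ℕ) (h : ∀ s ∈ l, s x = x) :
    l.prod x = x := by
  induction l with
  | nil => rfl
  | cons a t ih =>
    rw [List.prod_cons, Equiv.Perm.mul_apply, ih fun s hs => h s (List.mem_cons_of_mem a hs),
      h a List.mem_cons_self]

def sigAux (n c m : ℕ) : Equiv.Perm ℕ :=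
  ((List.range m).map fun j => Equiv.swap (n + j) (c + j)).prod

lemma sigmaPerm_eq (n m : ℕ) : sigmaPerm n m = sigAux n (n + m) m := rfl

lemma sigAux_fixed {n c m x : ℕ} (h : ∀ k < m, x ≠ n + k ∧ x ≠ c + k) :
    sigAux n c m x = x := by
  apply list_prod_fixed
  intro s hs
  simp only [List.mem_map, List.mem_range] at hs
  obtain ⟨k, hk, rfl⟩ := hs
  exact Equiv.swap_apply_of_ne_of_ne (h k hk).1 (h k hk).2

lemma sigAux_apply {n c m j : ℕ} (hc : n + m ≤ c) (hj : j < m) :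
    sigAux n c m (n + j) = c + j := by
  induction m with
  | zero => omega
  | succ m ih =>
    have : sigAux n c (m + 1) = sigAux n c m * Equiv.swap (n + m) (c + m) := by
      rw [sigAux, List.range_succ, List.map_append, List.prod_append]
      simp [sigAux]
    rw [this, Equiv.Perm.mul_apply]
    rcases Nat.lt_or_ge j m with hjm | hjm
    · rw [Equiv.swap_apply_of_ne_of_ne (by omega) (by omega), ih (by omega) hjm]
    · have hjm' : j = m := by omega
      subst hjm'
      rw [Equiv.swap_apply_left]
      exact sigAux_fixed fun k hk => ⟨by omega, by omega⟩

lemma sigma_fixed_lt {n m x : ℕ} (hx : x < n) : sigmaPerm n m x = x :=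
  sigAux_fixed fun k hk => ⟨by omega, by omega⟩

lemma sigma_fixed_ge {n m x : ℕ} (hx : n + 2 * m ≤ x) : sigmaPerm n m x = x :=
  sigAux_fixed fun k hk => ⟨by omega, by omega⟩

lemma sigma_apply {n m j : ℕ} (hj : j < m) : sigmaPerm n m (n + j) = n + m + j :=
  sigAux_apply (by omega) hj

lemma tau_mem (n m m' : ℕ) (h : 2 * m ≤ m') :
    (sigmaPerm n m')⁻¹ * sigmaPerm n m * sigmaPerm n m' ∈ stabSet (n + m') := by
  intro i hi
  simp only [Equiv.Perm.mul_apply]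
  have key : sigmaPerm n m (sigmaPerm n m' i) = sigmaPerm n m' i := by
    rcases Nat.lt_or_ge i n with h1 | h1
    · rw [sigma_fixed_lt h1]; exact sigma_fixed_lt h1
    · have hj : i - n < m' := by omega
      have : sigmaPerm n m' i = n + m' + (i - n) := by
        have := sigma_apply (n := n) (m := m') hj
        rwa [Nat.add_sub_cancel' h1] at this
      rw [this]
      exact sigma_fixed_ge (by omega)
  rw [key, Equiv.Perm.inv_def, Equiv.symm_apply_apply]
section Analytic

variable {H : Type*} [NormedAddCommGroup H] [InnerProductSpace ℂ H]
  (K : Equiv.Perm ℕ →* (H →L[ℂ] H)) (hunit : ∀ g (η : H), ‖K g η‖ = ‖η‖)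

include hunit in
lemma inner_K (g : Equiv.Perm ℕ) (a b : H) : ⟪K g a, K g b⟫_ℂ = ⟪a, b⟫_ℂ := by
  let f : H →ₗᵢ[ℂ] H := ⟨(K g : H →L[ℂ] H), hunit g⟩
  exact f.inner_map_map a b

include hunit in
lemma inner_K_left (g : Equiv.Perm ℕ) (a b : H) :
    ⟪K g a, b⟫_ℂ = ⟪a, K g⁻¹ b⟫_ℂ := by
  have hb : K g (K g⁻¹ b) = b := by
    rw [← ContinuousLinearMap.mul_apply, ← map_mul, mul_inv_cancel, map_one,
      ContinuousLinearMap.one_apply]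
  conv_lhs => rw [← hb]
  exact inner_K K hunit g a (K g⁻¹ b)

end Analytic

/-- the weak operator limit `P_n` of `K(σ_m^n)` satisfies `P_n² = P_n`;
together with self-adjointness it is an orthogonal projection. -/
theorem statement2
    {H : Type*} [NormedAddCommGroup H] [InnerProductSpace ℂ H] [CompleteSpace H]
    (K : Equiv.Perm ℕ →* (H →L[ℂ] H))
    (hunit : ∀ g (η : H), ‖K g η‖ = ‖η‖)
    (hcont : ∀ (η : H) (ε : ℝ), 0 < ε → ∃ k : ℕ, ∀ s ∈ stabSet k, ‖K s η - η‖ < ε)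
    (n : ℕ) (P : H →L[ℂ] H) (hsa : IsSelfAdjoint P)
    (hP : ∀ η ζ : H, Tendsto (fun m => ⟪K (sigmaPerm n m) η, ζ⟫_ℂ) atTop (𝓝 ⟪P η, ζ⟫_ℂ)) :
    P.comp P = P := by
  apply ContinuousLinearMap.ext
  intro η
  apply ext_inner_right ℂ
  intro ζ
  rw [ContinuousLinearMap.comp_apply]
  -- Key: for every m, ⟪K σ_m (P η), ζ⟫ = ⟪P η, ζ⟫
  have h2 : ∀ m, ⟪K (sigmaPerm n m) (P η), ζ⟫_ℂ = ⟪P η, ζ⟫_ℂ := by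
    intro m
    set A : ℕ → ℂ := fun m' => ⟪K (sigmaPerm n m * sigmaPerm n m') η, ζ⟫_ℂ with hA
    -- A tends to ⟪K σ_m (P η), ζ⟫
    have hA1 : Tendsto A atTop (𝓝 ⟪K (sigmaPerm n m) (P η), ζ⟫_ℂ) := by
      have := hP η (K (sigmaPerm n m)⁻¹ ζ)
      rw [← inner_K_left K hunit (sigmaPerm n m) (P η) ζ] at this
      convert this using 2 with m'
      show ⟪(K (sigmaPerm n m * sigmaPerm n m')) η, ζ⟫_ℂ = _
      rw [map_mul, ContinuousLinearMap.mul_apply,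
        inner_K_left K hunit (sigmaPerm n m) (K (sigmaPerm n m') η) ζ]
    -- A tends to ⟪P η, ζ⟫
    have hA2 : Tendsto A atTop (𝓝 ⟪P η, ζ⟫_ℂ) := by
      have hB : Tendsto (fun m' => ⟪K (sigmaPerm n m') η, ζ⟫_ℂ) atTop (𝓝 ⟪P η, ζ⟫_ℂ) :=
        hP η ζ
      have hdiff : Tendsto (fun m' => A m' - ⟪K (sigmaPerm n m') η, ζ⟫_ℂ) atTop (𝓝 0) := by
        rw [NormedAddCommGroup.tendsto_nhds_zero]
        intro ε hε
        have hε' : 0 < ε / (‖ζ‖ + 1) := by positivity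
        obtain ⟨k, hk⟩ := hcont η (ε / (‖ζ‖ + 1)) hε'
        rw [eventually_atTop]
        refine ⟨max (2 * m) k, fun m' hm' => ?_⟩
        have hm1 : 2 * m ≤ m' := le_trans (le_max_left _ _) hm'
        have hm2 : k ≤ m' := le_trans (le_max_right _ _) hm'
        set τ := (sigmaPerm n m')⁻¹ * sigmaPerm n m * sigmaPerm n m' with hτ
        have hτmem : τ ∈ stabSet k := by
          intro i hi
          exact tau_mem n m m' hm1 i (by omega)
        have hgrp : sigmaPerm n m * sigmaPerm n m' = sigmaPerm n m' * τ := by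
          rw [hτ]; group
        have hAeq : A m' = ⟪K (sigmaPerm n m') (K τ η), ζ⟫_ℂ := by
          rw [hA]
          simp only [hgrp, map_mul, ContinuousLinearMap.mul_apply]
        rw [hAeq, ← inner_sub_left, ← map_sub]
        calc ‖⟪K (sigmaPerm n m') (K τ η - η), ζ⟫_ℂ‖
            ≤ ‖K (sigmaPerm n m') (K τ η - η)‖ * ‖ζ‖ := norm_inner_le_norm _ _
          _ = ‖K τ η - η‖ * ‖ζ‖ := by rw [hunit]
          _ ≤ ‖K τ η - η‖ * (‖ζ‖ + 1) := by
              apply mul_le_mul_of_nonneg_left (by linarith) (norm_nonneg _)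
          _ < ε / (‖ζ‖ + 1) * (‖ζ‖ + 1) := by
              apply mul_lt_mul_of_pos_right (hk τ hτmem) (by positivity)
          _ = ε := by field_simp
      have := hdiff.add hB
      simp only [sub_add_cancel, zero_add] at this
      exact this
    exact tendsto_nhds_unique hA1 hA2
  have h1 := hP (P η) ζ
  simp only [h2] at h1
  exact tendsto_nhds_unique h1 tendsto_const_nhds
end

section
/- For every s in the subgroup S(n,∞) of bijections of ℕ fixing 1,...,n, the equality K(s)·P_n = P_n holds, where P_n is the weak operator limit of K(σ_m^n). -/
open MeasureTheory Filter Topology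
open scoped InnerProductSpace

lemma prod_apply_fix (l : List (Equiv.Perm ℕ)) (x : ℕ) (h : ∀ p ∈ l, p x = x) :
    l.prod x = x := by
  induction l with
  | nil => simp
  | cons a l ih =>
      rw [List.prod_cons, Equiv.Perm.mul_apply, ih (fun p hp => h p (List.mem_cons_of_mem _ hp)),
        h a (List.mem_cons_self)]

lemma sigma_fix (n m i : ℕ) (hi : i < n) : sigmaPerm n m i = i := by
  apply prod_apply_fix
  intro p hp
  simp only [List.mem_map, List.mem_range] at hp
  obtain ⟨j, hj, rfl⟩ := hp
  exact Equiv.swap_apply_of_ne_of_ne (by omega) (by omega)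

lemma sigma_move (n m j : ℕ) (hj : j < m) : sigmaPerm n m (n + j) = n + m + j := by
  have hsplit : List.range m
      = (List.range j ++ [j]) ++ (List.range (m - (j+1))).map ((j+1) + ·) := by
    rw [← List.range_succ, ← List.range_add]
    congr 1
    omega
  rw [sigmaPerm, hsplit, List.map_append, List.map_append, List.prod_append, List.prod_append,
    Equiv.Perm.mul_apply, Equiv.Perm.mul_apply]
  have h1 : ((((List.range (m - (j+1))).map ((j+1) + ·)).map
      (fun j => Equiv.swap (n + j) (n + m + j))).prod) (n + j) = n + j := by
    apply prod_apply_fix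
    intro p hp
    simp only [List.mem_map, List.mem_range] at hp
    obtain ⟨i, hi, rfl⟩ := hp
    obtain ⟨i', hi', rfl⟩ := hi
    exact Equiv.swap_apply_of_ne_of_ne (by omega) (by omega)
  rw [h1]
  simp only [List.map_cons, List.map_nil, List.prod_cons, List.prod_nil, mul_one]
  rw [Equiv.swap_apply_left]
  apply prod_apply_fix
  intro p hp
  simp only [List.mem_map, List.mem_range] at hp
  obtain ⟨i, hi, rfl⟩ := hp
  exact Equiv.swap_apply_of_ne_of_ne (by omega) (by omega)

lemma sigma_fix_inv (n m i : ℕ) (hi : i < n) : (sigmaPerm n m)⁻¹ i = i := by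
  conv_lhs => rw [← sigma_fix n m i hi]
  exact Equiv.symm_apply_apply _ _

lemma sigma_move_inv (n m j : ℕ) (hj : j < m) : (sigmaPerm n m)⁻¹ (n + m + j) = n + j := by
  conv_lhs => rw [← sigma_move n m j hj]
  exact Equiv.symm_apply_apply _ _

/-- Finitely supported approximation of `s`: `approxPerm s j` agrees with `s` on `[0, j)`. -/
def approxPerm (s : Equiv.Perm ℕ) : ℕ → Equiv.Perm ℕ
  | 0 => 1
  | j+1 => approxPerm s j * Equiv.swap j ((approxPerm s j)⁻¹ (s j))

lemma approxPerm_agree (s : Equiv.Perm ℕ) : ∀ j, ∀ i < j, approxPerm s j i = s i := by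
  intro j
  induction j with
  | zero => omega
  | succ j ih =>
      intro i hi
      rw [approxPerm, Equiv.Perm.mul_apply]
      rcases Nat.lt_or_ge i j with h | h
      · rw [Equiv.swap_apply_of_ne_of_ne (by omega) ?_, ih i h]
        intro hcon
        have : approxPerm s j i = s j := by
          rw [hcon, Equiv.Perm.coe_inv, Equiv.apply_symm_apply]
        rw [ih i h] at this
        exact absurd (s.injective this) (by omega)
      · have : i = j := by omega
        subst this
        rw [Equiv.swap_apply_left, Equiv.Perm.coe_inv, Equiv.apply_symm_apply]

lemma approxPerm_support (s : Equiv.Perm ℕ) : ∀ j, ∃ N, ∀ i ≥ N, approxPerm s j i = i := by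
  intro j
  induction j with
  | zero => exact ⟨0, fun i _ => rfl⟩
  | succ j ih =>
      obtain ⟨N, hN⟩ := ih
      refine ⟨max N (max (j+1) ((approxPerm s j)⁻¹ (s j) + 1)), fun i hi => ?_⟩
      rw [approxPerm, Equiv.Perm.mul_apply,
        Equiv.swap_apply_of_ne_of_ne (by omega) (by omega), hN i (by omega)]

section Unitary

variable {H : Type*} [NormedAddCommGroup H] [InnerProductSpace ℂ H]
  (K : Equiv.Perm ℕ →* (H →L[ℂ] H)) (hunit : ∀ g (η : H), ‖K g η‖ = ‖η‖)

include hunit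

lemma K_inner (g : Equiv.Perm ℕ) (x y : H) : ⟪K g x, K g y⟫_ℂ = ⟪x, y⟫_ℂ :=
  LinearIsometry.inner_map_map ⟨(K g).toLinearMap, hunit g⟩ x y

omit hunit in
lemma K_apply_inv (g : Equiv.Perm ℕ) (y : H) : K g (K g⁻¹ y) = y := by
  rw [← ContinuousLinearMap.mul_apply, ← map_mul, mul_inv_cancel, map_one,
    ContinuousLinearMap.one_apply]

lemma K_adj (g : Equiv.Perm ℕ) (x y : H) : ⟪K g x, y⟫_ℂ = ⟪x, K g⁻¹ y⟫_ℂ := by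
  conv_lhs => rw [← K_apply_inv K g y]
  exact K_inner K hunit g x (K g⁻¹ y)

/-- `P` is fixed by `K t` for any finitely supported `t` in the stabilizer. -/
lemma K_fixed_of_finSupp
    (hcont : ∀ (η : H) (ε : ℝ), 0 < ε → ∃ k : ℕ, ∀ s ∈ stabSet k, ‖K s η - η‖ < ε)
    (n : ℕ) (P : H →L[ℂ] H)
    (hP : ∀ η ζ : H, Tendsto (fun m => ⟪K (sigmaPerm n m) η, ζ⟫_ℂ) atTop (𝓝 ⟪P η, ζ⟫_ℂ))
    (t : Equiv.Perm ℕ) (ht : t ∈ stabSet n) (N : ℕ) (hN : ∀ i ≥ N, t i = i) (η : H) :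
    K t (P η) = P η := by
  apply ext_inner_right ℂ
  intro ζ
  have hA := hP η ζ
  have hB : Tendsto (fun m => ⟪K (t * sigmaPerm n m) η, ζ⟫_ℂ) atTop (𝓝 ⟪K t (P η), ζ⟫_ℂ) := by
    have h := hP η (K t⁻¹ ζ)
    have e1 : ∀ x : H, ⟪K t x, ζ⟫_ℂ = ⟪x, K t⁻¹ ζ⟫_ℂ := fun x => K_adj K hunit t x ζ
    simp only [map_mul, ContinuousLinearMap.mul_apply, e1]
    exact h
  -- the difference tends to zero
  have hd : Tendsto (fun m => K (t * sigmaPerm n m) η - K (sigmaPerm n m) η) atTop (𝓝 0) := by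
    rw [NormedAddCommGroup.tendsto_nhds_zero]
    intro ε hε
    obtain ⟨k, hk⟩ := hcont η ε hε
    filter_upwards [eventually_ge_atTop (max N k)] with m hm
    set σ := sigmaPerm n m with hσ
    set c := σ⁻¹ * (t * σ) with hcdef
    have hc : t * σ = σ * c := by rw [hcdef]; group
    have hcstab : c ∈ stabSet k := by
      intro i hi
      have him : i < m := by omega
      show (σ⁻¹ * (t * σ)) i = i
      simp only [Equiv.Perm.mul_apply]
      rcases Nat.lt_or_ge i n with h | h
      · rw [sigma_fix n m i h, ht i h, sigma_fix_inv n m i h]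
      · have hrep : i = n + (i - n) := by omega
        have hjm : i - n < m := by omega
        rw [hrep, sigma_move n m (i - n) hjm, hN _ (by omega), sigma_move_inv n m (i - n) hjm]
    rw [hc, map_mul, ContinuousLinearMap.mul_apply, ← map_sub (K σ), hunit]
    exact hk c hcstab
  have hZ : Tendsto (fun m => (⟪K (t * sigmaPerm n m) η, ζ⟫_ℂ - ⟪K (sigmaPerm n m) η, ζ⟫_ℂ))
      atTop (𝓝 0) := by
    apply squeeze_zero_norm
      (a := fun m => ‖K (t * sigmaPerm n m) η - K (sigmaPerm n m) η‖ * ‖ζ‖)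
    · intro m
      rw [← inner_sub_left]
      exact norm_inner_le_norm _ _
    · have := (hd.norm).mul_const ‖ζ‖
      simpa using this
  have := tendsto_nhds_unique (hB.sub hA) hZ
  exact sub_eq_zero.mp this

end Unitary

/-- `K(s) ∘ P_n = P_n` for every `s` in the stabilizer `S(n,∞)`,
where `P_n` is the weak operator limit of `K(σ_m^n)`. -/
theorem statement3
    {H : Type*} [NormedAddCommGroup H] [InnerProductSpace ℂ H] [CompleteSpace H]
    (K : Equiv.Perm ℕ →* (H →L[ℂ] H))
    (hunit : ∀ g (η : H), ‖K g η‖ = ‖η‖)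
    (hcont : ∀ (η : H) (ε : ℝ), 0 < ε → ∃ k : ℕ, ∀ s ∈ stabSet k, ‖K s η - η‖ < ε)
    (n : ℕ) (P : H →L[ℂ] H)
    (hP : ∀ η ζ : H, Tendsto (fun m => ⟪K (sigmaPerm n m) η, ζ⟫_ℂ) atTop (𝓝 ⟪P η, ζ⟫_ℂ)) :
    ∀ s ∈ stabSet n, (K s).comp P = P := by
  intro s hs
  have key : ∀ η : H, K s (P η) = P η := by
    intro η
    set ξ := P η with hξ
    have hall : ∀ ε > (0:ℝ), ‖K s ξ - ξ‖ < ε := by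
      intro ε hε
      obtain ⟨k, hk⟩ := hcont ξ ε hε
      set k' := max k n with hk'
      set t := approxPerm s k' with htdef
      have hta : ∀ i < k', t i = s i := approxPerm_agree s k'
      obtain ⟨N, hN⟩ := approxPerm_support s k'
      have htstab : t ∈ stabSet n := by
        intro i hi
        rw [hta i (lt_of_lt_of_le hi (le_max_right k n))]
        exact hs i hi
      have hKt : K t ξ = ξ := K_fixed_of_finSupp K hunit hcont n P hP t htstab N hN η
      set u := t⁻¹ * s with hudef
      have hu : u ∈ stabSet k := by
        intro i hi
        show (t⁻¹ * s) i = i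
        rw [Equiv.Perm.mul_apply, ← hta i (lt_of_lt_of_le hi (le_max_left k n)),
          Equiv.Perm.coe_inv, Equiv.symm_apply_apply]
      have hsu : s = t * u := by rw [hudef]; group
      calc ‖K s ξ - ξ‖ = ‖K t (K u ξ) - K t ξ‖ := by
            rw [hsu, map_mul, ContinuousLinearMap.mul_apply, hKt]
        _ = ‖K t (K u ξ - ξ)‖ := by rw [map_sub]
        _ = ‖K u ξ - ξ‖ := hunit t _
        _ < ε := hk u hu
    have h1 : ‖K s ξ - ξ‖ ≤ 0 := by
      by_contra h
      push_neg at h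
      exact absurd (hall _ h) (lt_irrefl _)
    have := norm_le_zero_iff.mp h1
    exact sub_eq_zero.mp this
  ext η
  simp [ContinuousLinearMap.comp_apply, key η]
end

section
/- The range of the projection P_n equals the subspace of vectors fixed by K(s) for all s in S(n,∞): P_n H = {η ∈ H : K(s)η = η for all s ∈ S(n,∞)}. -/
open MeasureTheory Filter Topology
open scoped InnerProductSpace

lemma list_prod_fixes (i : ℕ) (l : List (Equiv.Perm ℕ)) (h : ∀ p ∈ l, p i = i) :
    l.prod i = i := by
  induction l with
  | nil => simp
  | cons a t ih =>
      have : t.prod i = i := ih fun p hp => h p (List.mem_cons_of_mem a hp)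
      simp [List.prod_cons, Equiv.Perm.mul_apply, this, h a List.mem_cons_self]

lemma sigmaPerm_mem_stabSet (n m : ℕ) : sigmaPerm n m ∈ stabSet n := by
  intro i hi
  apply list_prod_fixes
  intro p hp
  simp only [List.mem_map, List.mem_range] at hp
  obtain ⟨j, _, rfl⟩ := hp
  apply Equiv.swap_apply_of_ne_of_ne <;> omega

/-- the range of the projection `P_n` is exactly the subspace of vectors
fixed by `K(s)` for every `s ∈ S(n,∞)`. -/
theorem statement4
    {H : Type*} [NormedAddCommGroup H] [InnerProductSpace ℂ H] [CompleteSpace H]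
    (K : Equiv.Perm ℕ →* (H →L[ℂ] H))
    (hunit : ∀ g (η : H), ‖K g η‖ = ‖η‖)
    (hcont : ∀ (η : H) (ε : ℝ), 0 < ε → ∃ k : ℕ, ∀ s ∈ stabSet k, ‖K s η - η‖ < ε)
    (n : ℕ) (P : H →L[ℂ] H) (hsa : IsSelfAdjoint P) (hidem : P.comp P = P)
    (hP : ∀ η ζ : H, Tendsto (fun m => ⟪K (sigmaPerm n m) η, ζ⟫_ℂ) atTop (𝓝 ⟪P η, ζ⟫_ℂ))
    (hfix : ∀ s ∈ stabSet n, (K s).comp P = P) :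
    Set.range P = {η : H | ∀ s ∈ stabSet n, K s η = η} := by
  ext η
  constructor
  · rintro ⟨ζ, rfl⟩ s hs
    have := hfix s hs
    calc K s (P ζ) = ((K s).comp P) ζ := rfl
    _ = P ζ := by rw [this]
  · intro hη
    refine ⟨η, ?_⟩
    apply ext_inner_right ℂ
    intro ζ
    have h1 := hP η ζ
    have h2 : ∀ m, ⟪K (sigmaPerm n m) η, ζ⟫_ℂ = ⟪η, ζ⟫_ℂ := fun m => by
      rw [hη _ (sigmaPerm_mem_stabSet n m)]
    simp only [h2] at h1
    exact (tendsto_const_nhds_iff.mp h1).symm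
end

section
/- For each fixed k, the sequence of operators K((k, N)) (images of the transpositions swapping k and N) converges in the weak operator topology, as N → ∞, to a self-adjoint orthogonal projection O_k. -/
open MeasureTheory Filter Topology
open scoped InnerProductSpace

section Aux

variable {H : Type*} [NormedAddCommGroup H] [InnerProductSpace ℂ H]

/-- `K g` preserves inner products. -/
lemma K_inner_map (K : Equiv.Perm ℕ →* (H →L[ℂ] H))
    (hunit : ∀ g (η : H), ‖K g η‖ = ‖η‖) (g : Equiv.Perm ℕ) (x y : H) :
    ⟪K g x, K g y⟫_ℂ = ⟪x, y⟫_ℂ :=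
  LinearIsometry.inner_map_map ⟨(K g).toLinearMap, hunit g⟩ x y

lemma K_cancel (K : Equiv.Perm ℕ →* (H →L[ℂ] H)) (g : Equiv.Perm ℕ) (x : H) :
    K g (K g⁻¹ x) = x := by
  have h : K g * K g⁻¹ = 1 := by rw [← map_mul, mul_inv_cancel, map_one]
  have h2 := congrArg (fun T : H →L[ℂ] H => T x) h
  simpa [ContinuousLinearMap.mul_apply] using h2

lemma K_inner_left (K : Equiv.Perm ℕ →* (H →L[ℂ] H))
    (hunit : ∀ g (η : H), ‖K g η‖ = ‖η‖) (g : Equiv.Perm ℕ) (x y : H) :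
    ⟪K g x, y⟫_ℂ = ⟪x, K g⁻¹ y⟫_ℂ := by
  calc ⟪K g x, y⟫_ℂ = ⟪K g x, K g (K g⁻¹ y)⟫_ℂ := by rw [K_cancel]
  _ = ⟪x, K g⁻¹ y⟫_ℂ := K_inner_map K hunit g x _

lemma K_swap_inner (K : Equiv.Perm ℕ →* (H →L[ℂ] H))
    (hunit : ∀ g (η : H), ‖K g η‖ = ‖η‖) (a b : ℕ) (x y : H) :
    ⟪K (Equiv.swap a b) x, y⟫_ℂ = ⟪x, K (Equiv.swap a b) y⟫_ℂ := by
  rw [K_inner_left K hunit, Equiv.swap_inv]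

lemma swap_conj_eq {k N N' : ℕ} (h1 : k ≠ N) (h2 : k ≠ N') :
    Equiv.swap k N' = Equiv.swap N N' * Equiv.swap k N * Equiv.swap N N' := by
  have h := Equiv.swap_apply_apply (Equiv.swap N N') k N
  rw [Equiv.swap_apply_of_ne_of_ne h1 h2, Equiv.swap_apply_left, Equiv.swap_inv] at h
  exact h

lemma swap_mul_swap_eq {k M N : ℕ} (h1 : N ≠ M) (h2 : N ≠ k) :
    Equiv.swap k N * Equiv.swap k M = Equiv.swap k M * Equiv.swap M N := by
  have h := Equiv.swap_apply_apply (Equiv.swap k M) M N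
  rw [Equiv.swap_apply_right, Equiv.swap_apply_of_ne_of_ne h2 h1, Equiv.swap_inv] at h
  rw [h, Equiv.mul_swap_mul_self]

lemma key_cauchy (K : Equiv.Perm ℕ →* (H →L[ℂ] H))
    (hunit : ∀ g (η : H), ‖K g η‖ = ‖η‖)
    (hcont : ∀ (η : H) (ε : ℝ), 0 < ε → ∃ k : ℕ, ∀ s ∈ stabSet k, ‖K s η - η‖ < ε)
    (k : ℕ) (η ζ : H) :
    CauchySeq (fun N => ⟪K (Equiv.swap k N) η, ζ⟫_ℂ) := by
  rw [Metric.cauchySeq_iff']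
  intro ε hε
  obtain ⟨m₁, hm₁⟩ := hcont η (ε / (2 * (‖ζ‖ + 1))) (by positivity)
  obtain ⟨m₂, hm₂⟩ := hcont ζ (ε / (2 * (‖η‖ + 1))) (by positivity)
  refine ⟨max (max m₁ m₂) (k + 1), fun N hN => ?_⟩
  set M := max (max m₁ m₂) (k + 1) with hMdef
  have hm₁M : m₁ ≤ M := le_trans (le_max_left _ _) (le_max_left _ _)
  have hm₂M : m₂ ≤ M := le_trans (le_max_right _ _) (le_max_left _ _)
  have hkM : k + 1 ≤ M := le_max_right _ _
  rcases eq_or_ne N M with rfl | hne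
  · simpa using hε
  have hkM' : k ≠ M := by omega
  have hkN : k ≠ N := by omega
  -- the conjugating transposition
  have hσ₁ : Equiv.swap M N ∈ stabSet m₁ := by
    intro i hi
    exact Equiv.swap_apply_of_ne_of_ne (by omega) (by omega)
  have hσ₂ : Equiv.swap M N ∈ stabSet m₂ := by
    intro i hi
    exact Equiv.swap_apply_of_ne_of_ne (by omega) (by omega)
  have hswap : Equiv.swap k N = Equiv.swap M N * Equiv.swap k M * Equiv.swap M N :=
    swap_conj_eq hkM' hkN
  have hv : K (Equiv.swap k N) η
      = K (Equiv.swap M N) (K (Equiv.swap k M) (K (Equiv.swap M N) η)) := by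
    have h := congrArg (fun g => K g η) hswap
    simpa [map_mul, ContinuousLinearMap.mul_apply] using h
  have e1 : ⟪K (Equiv.swap k N) η, ζ⟫_ℂ
      = ⟪K (Equiv.swap k M) (K (Equiv.swap M N) η), K (Equiv.swap M N) ζ⟫_ℂ := by
    rw [hv, K_swap_inner K hunit M N]
  rw [Complex.dist_eq, e1]
  have esplit : ⟪K (Equiv.swap k M) (K (Equiv.swap M N) η), K (Equiv.swap M N) ζ⟫_ℂ
        - ⟪K (Equiv.swap k M) η, ζ⟫_ℂ
      = ⟪K (Equiv.swap k M) (K (Equiv.swap M N) η - η), K (Equiv.swap M N) ζ⟫_ℂ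
        + ⟪K (Equiv.swap k M) η, K (Equiv.swap M N) ζ - ζ⟫_ℂ := by
    rw [map_sub, inner_sub_left, inner_sub_right]; ring
  rw [esplit]
  have b1 : ‖⟪K (Equiv.swap k M) (K (Equiv.swap M N) η - η), K (Equiv.swap M N) ζ⟫_ℂ‖
      ≤ ‖K (Equiv.swap M N) η - η‖ * ‖ζ‖ := by
    calc ‖⟪K (Equiv.swap k M) (K (Equiv.swap M N) η - η), K (Equiv.swap M N) ζ⟫_ℂ‖
        ≤ ‖K (Equiv.swap k M) (K (Equiv.swap M N) η - η)‖ * ‖K (Equiv.swap M N) ζ‖ :=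
          norm_inner_le_norm _ _
      _ = ‖K (Equiv.swap M N) η - η‖ * ‖ζ‖ := by rw [hunit, hunit]
  have b2 : ‖⟪K (Equiv.swap k M) η, K (Equiv.swap M N) ζ - ζ⟫_ℂ‖
      ≤ ‖η‖ * ‖K (Equiv.swap M N) ζ - ζ‖ := by
    calc ‖⟪K (Equiv.swap k M) η, K (Equiv.swap M N) ζ - ζ⟫_ℂ‖
        ≤ ‖K (Equiv.swap k M) η‖ * ‖K (Equiv.swap M N) ζ - ζ‖ := norm_inner_le_norm _ _
      _ = ‖η‖ * ‖K (Equiv.swap M N) ζ - ζ‖ := by rw [hunit]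
  have hx1 := hm₁ _ hσ₁
  have hx2 := hm₂ _ hσ₂
  have h1 : ‖K (Equiv.swap M N) η - η‖ * (2 * (‖ζ‖ + 1)) < ε :=
    (lt_div_iff₀ (by positivity)).mp hx1
  have h2 : ‖K (Equiv.swap M N) ζ - ζ‖ * (2 * (‖η‖ + 1)) < ε :=
    (lt_div_iff₀ (by positivity)).mp hx2
  calc ‖⟪K (Equiv.swap k M) (K (Equiv.swap M N) η - η), K (Equiv.swap M N) ζ⟫_ℂ
        + ⟪K (Equiv.swap k M) η, K (Equiv.swap M N) ζ - ζ⟫_ℂ‖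
      ≤ ‖⟪K (Equiv.swap k M) (K (Equiv.swap M N) η - η), K (Equiv.swap M N) ζ⟫_ℂ‖
        + ‖⟪K (Equiv.swap k M) η, K (Equiv.swap M N) ζ - ζ⟫_ℂ‖ := norm_add_le _ _
    _ ≤ ‖K (Equiv.swap M N) η - η‖ * ‖ζ‖ + ‖η‖ * ‖K (Equiv.swap M N) ζ - ζ‖ :=
        add_le_add b1 b2
    _ < ε := by
        nlinarith [norm_nonneg ζ, norm_nonneg η,
          norm_nonneg (K (Equiv.swap M N) η - η), norm_nonneg (K (Equiv.swap M N) ζ - ζ)]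

/-- From a bounded sesquilinear form, produce the associated continuous operator. -/
lemma exists_op [CompleteSpace H] (B : H → H → ℂ)
    (haddl : ∀ x x' y, B (x + x') y = B x y + B x' y)
    (hsmull : ∀ (c : ℂ) x y, B (c • x) y = starRingEnd ℂ c * B x y)
    (haddr : ∀ x y y', B x (y + y') = B x y + B x y')
    (hsmulr : ∀ (c : ℂ) x y, B x (c • y) = c * B x y)
    (hbound : ∀ x y, ‖B x y‖ ≤ ‖x‖ * ‖y‖) :
    ∃ O : H →L[ℂ] H, ∀ x y, ⟪O x, y⟫_ℂ = B x y := by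
  let F : H → (H →L[ℂ] ℂ) := fun x => LinearMap.mkContinuous
    { toFun := fun y => B x y
      map_add' := fun y y' => haddr x y y'
      map_smul' := fun c y => by simpa [smul_eq_mul] using hsmulr c x y }
    ‖x‖ (fun y => hbound x y)
  let f : H → H := fun x => (InnerProductSpace.toDual ℂ H).symm (F x)
  have hf : ∀ x y, ⟪f x, y⟫_ℂ = B x y := fun x y => InnerProductSpace.toDual_symm_apply
  have hfa : ∀ x x', f (x + x') = f x + f x' := by
    intro x x'
    apply ext_inner_right ℂ
    intro v
    rw [inner_add_left, hf, hf, hf, haddl]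
  have hfs : ∀ (c : ℂ) x, f (c • x) = c • f x := by
    intro c x
    apply ext_inner_right ℂ
    intro v
    rw [inner_smul_left, hf, hf, hsmull]
  have hfn : ∀ x, ‖f x‖ ≤ 1 * ‖x‖ := by
    intro x
    rw [one_mul]
    have h1 : ‖f x‖ = ‖F x‖ := LinearIsometryEquiv.norm_map _ _
    rw [h1]
    exact LinearMap.mkContinuous_norm_le _ (norm_nonneg x) _
  exact ⟨LinearMap.mkContinuous
    { toFun := f, map_add' := hfa, map_smul' := fun c x => by simpa using hfs c x } 1 hfn, hf⟩

end Aux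

/-- for each `k`, the operators `K((k,N))` (images of transpositions)
converge in the weak operator topology, as `N → ∞`, to a self-adjoint orthogonal
projection `O_k`. -/
theorem statement5
    {H : Type*} [NormedAddCommGroup H] [InnerProductSpace ℂ H] [CompleteSpace H]
    (K : Equiv.Perm ℕ →* (H →L[ℂ] H))
    (hunit : ∀ g (η : H), ‖K g η‖ = ‖η‖)
    (hcont : ∀ (η : H) (ε : ℝ), 0 < ε → ∃ k : ℕ, ∀ s ∈ stabSet k, ‖K s η - η‖ < ε)
    (k : ℕ) :
    ∃ O : H →L[ℂ] H, IsSelfAdjoint O ∧ O.comp O = O ∧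
      ∀ η ζ : H, Tendsto (fun N => ⟪K (Equiv.swap k N) η, ζ⟫_ℂ) atTop (𝓝 ⟪O η, ζ⟫_ℂ) := by
  have hex : ∀ η ζ : H, ∃ L : ℂ,
      Tendsto (fun N => ⟪K (Equiv.swap k N) η, ζ⟫_ℂ) atTop (𝓝 L) :=
    fun η ζ => cauchySeq_tendsto_of_complete (key_cauchy K hunit hcont k η ζ)
  choose B hB using hex
  have hBbound : ∀ η ζ, ‖B η ζ‖ ≤ ‖η‖ * ‖ζ‖ := by
    intro η ζ
    refine le_of_tendsto (hB η ζ).norm (Filter.Eventually.of_forall fun N => ?_)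
    calc ‖⟪K (Equiv.swap k N) η, ζ⟫_ℂ‖ ≤ ‖K (Equiv.swap k N) η‖ * ‖ζ‖ :=
          norm_inner_le_norm _ _
      _ = ‖η‖ * ‖ζ‖ := by rw [hunit]
  have hBaddl : ∀ x x' y : H, B (x + x') y = B x y + B x' y := by
    intro x x' y
    refine tendsto_nhds_unique (hB (x + x') y) ?_
    have h := (hB x y).add (hB x' y)
    simpa [map_add, inner_add_left] using h
  have hBsmull : ∀ (c : ℂ) (x y : H), B (c • x) y = starRingEnd ℂ c * B x y := by
    intro c x y
    refine tendsto_nhds_unique (hB (c • x) y) ?_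
    have h := (hB x y).const_mul (starRingEnd ℂ c)
    simpa [_root_.map_smul, inner_smul_left, mul_comm] using h
  have hBaddr : ∀ x y y' : H, B x (y + y') = B x y + B x y' := by
    intro x y y'
    refine tendsto_nhds_unique (hB x (y + y')) ?_
    have h := (hB x y).add (hB x y')
    simpa [inner_add_right] using h
  have hBsmulr : ∀ (c : ℂ) (x y : H), B x (c • y) = c * B x y := by
    intro c x y
    refine tendsto_nhds_unique (hB x (c • y)) ?_
    have h := (hB x y).const_mul c
    simpa [inner_smul_right] using h
  obtain ⟨O, hO⟩ := exists_op B hBaddl hBsmull hBaddr hBsmulr hBbound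
  have htend : ∀ η ζ : H,
      Tendsto (fun N => ⟪K (Equiv.swap k N) η, ζ⟫_ℂ) atTop (𝓝 ⟪O η, ζ⟫_ℂ) := by
    intro η ζ
    rw [hO]
    exact hB η ζ
  -- conjugate symmetry of B
  have hconj : ∀ x y : H, B x y = starRingEnd ℂ (B y x) := by
    intro x y
    refine tendsto_nhds_unique (hB x y) ?_
    have h1 := (hB y x).star
    have h2 : (fun N => star (⟪K (Equiv.swap k N) y, x⟫_ℂ))
        = fun N => ⟪K (Equiv.swap k N) x, y⟫_ℂ := by
      funext N
      rw [← starRingEnd_apply, inner_conj_symm, K_swap_inner K hunit]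
    rw [h2] at h1
    rw [starRingEnd_apply]
    exact h1
  have hsym : ∀ x y : H, ⟪O x, y⟫_ℂ = ⟪x, O y⟫_ℂ := by
    intro x y
    rw [hO x y, hconj x y, ← hO y x]
    exact inner_conj_symm _ _
  have hsa : IsSelfAdjoint O :=
    ContinuousLinearMap.isSelfAdjoint_iff_isSymmetric.mpr (fun x y => hsym x y)
  -- the key analytic claim : ⟪O η, O ζ⟫ = ⟪O η, ζ⟫
  have hBclaim : ∀ η ζ : H, ⟪O η, O ζ⟫_ℂ = ⟪O η, ζ⟫_ℂ := by
    intro η ζ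
    have key : ∀ ε : ℝ, 0 < ε → ‖⟪O η, O ζ⟫_ℂ - ⟪O η, ζ⟫_ℂ‖ ≤ ε := by
      intro ε hε
      have hε' : 0 < ε / (‖ζ‖ + 1) := by positivity
      obtain ⟨m₁, hm₁⟩ := hcont η (ε / (‖ζ‖ + 1)) hε'
      -- step 1 : for large N, ⟪O η, K g_N ζ⟫ is close to ⟪O η, ζ⟫
      have step1 : ∀ N, max m₁ (k + 1) ≤ N →
          ‖⟪O η, K (Equiv.swap k N) ζ⟫_ℂ - ⟪O η, ζ⟫_ℂ‖ ≤ ε / (‖ζ‖ + 1) * ‖ζ‖ := by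
        intro N hN
        have hm₁N : m₁ ≤ N := le_trans (le_max_left _ _) hN
        have hkN : k + 1 ≤ N := le_trans (le_max_right _ _) hN
        rw [hO η (K (Equiv.swap k N) ζ), hO η ζ, ← dist_eq_norm]
        refine le_of_tendsto ((hB η (K (Equiv.swap k N) ζ)).dist (hB η ζ)) ?_
        filter_upwards [eventually_ge_atTop (max (max m₁ (k + 1)) (N + 1))] with M hM
        have hm₁M : m₁ ≤ M := le_trans (le_trans (le_max_left _ _) (le_max_left _ _)) hM
        have hkM : k + 1 ≤ M := le_trans (le_trans (le_max_right _ _) (le_max_left _ _)) hM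
        have hNM : N + 1 ≤ M := le_trans (le_max_right _ _) hM
        have hNM' : N ≠ M := by omega
        have hNk : N ≠ k := by omega
        have hstab : Equiv.swap M N ∈ stabSet m₁ := by
          intro i hi
          exact Equiv.swap_apply_of_ne_of_ne (by omega) (by omega)
        have hv : K (Equiv.swap k N) (K (Equiv.swap k M) η)
            = K (Equiv.swap k M) (K (Equiv.swap M N) η) := by
          have h := congrArg (fun g => K g η) (swap_mul_swap_eq hNM' hNk)
          simpa [map_mul, ContinuousLinearMap.mul_apply] using h
        have e1 : ⟪K (Equiv.swap k M) η, K (Equiv.swap k N) ζ⟫_ℂ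
            = ⟪K (Equiv.swap k M) (K (Equiv.swap M N) η), ζ⟫_ℂ := by
          rw [← K_swap_inner K hunit k N (K (Equiv.swap k M) η) ζ, hv]
        rw [e1, dist_eq_norm]
        calc ‖⟪K (Equiv.swap k M) (K (Equiv.swap M N) η), ζ⟫_ℂ
              - ⟪K (Equiv.swap k M) η, ζ⟫_ℂ‖
            = ‖⟪K (Equiv.swap k M) (K (Equiv.swap M N) η - η), ζ⟫_ℂ‖ := by
              rw [← inner_sub_left, ← map_sub]
          _ ≤ ‖K (Equiv.swap k M) (K (Equiv.swap M N) η - η)‖ * ‖ζ‖ :=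
              norm_inner_le_norm _ _
          _ = ‖K (Equiv.swap M N) η - η‖ * ‖ζ‖ := by rw [hunit]
          _ ≤ ε / (‖ζ‖ + 1) * ‖ζ‖ :=
              mul_le_mul_of_nonneg_right (le_of_lt (hm₁ _ hstab)) (norm_nonneg ζ)
      -- step 2 : ⟪O η, K g_N ζ⟫ tends to ⟪O η, O ζ⟫
      have step2 : Tendsto (fun N => ⟪O η, K (Equiv.swap k N) ζ⟫_ℂ) atTop
          (𝓝 ⟪O η, O ζ⟫_ℂ) := by
        have h1 := (hB ζ (O η)).star
        have h2 : (fun N => star (⟪K (Equiv.swap k N) ζ, O η⟫_ℂ))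
            = fun N => ⟪O η, K (Equiv.swap k N) ζ⟫_ℂ := by
          funext N
          rw [← starRingEnd_apply, inner_conj_symm]
        have h3 : star (B ζ (O η)) = ⟪O η, O ζ⟫_ℂ := by
          rw [← hO ζ (O η), ← starRingEnd_apply, inner_conj_symm]
        rw [h2, h3] at h1
        exact h1
      have step3 : Tendsto
          (fun N => ‖⟪O η, K (Equiv.swap k N) ζ⟫_ℂ - ⟪O η, ζ⟫_ℂ‖) atTop
          (𝓝 ‖⟪O η, O ζ⟫_ℂ - ⟪O η, ζ⟫_ℂ‖) := (step2.sub tendsto_const_nhds).norm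
      have hfin : ‖⟪O η, O ζ⟫_ℂ - ⟪O η, ζ⟫_ℂ‖ ≤ ε / (‖ζ‖ + 1) * ‖ζ‖ := by
        refine le_of_tendsto step3 ?_
        filter_upwards [eventually_ge_atTop (max m₁ (k + 1))] with N hN
        exact step1 N hN
      calc ‖⟪O η, O ζ⟫_ℂ - ⟪O η, ζ⟫_ℂ‖ ≤ ε / (‖ζ‖ + 1) * ‖ζ‖ := hfin
        _ ≤ ε := by
          rw [div_mul_eq_mul_div, div_le_iff₀ (by positivity)]
          nlinarith [norm_nonneg ζ]
    by_contra hne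
    have hpos : 0 < ‖⟪O η, O ζ⟫_ℂ - ⟪O η, ζ⟫_ℂ‖ := by
      rw [norm_pos_iff, sub_ne_zero]
      exact hne
    have := key (‖⟪O η, O ζ⟫_ℂ - ⟪O η, ζ⟫_ℂ‖ / 2) (by linarith)
    linarith
  have hidem : O.comp O = O := by
    ext η
    apply ext_inner_right ℂ
    intro ζ
    rw [ContinuousLinearMap.comp_apply, hO (O η) ζ, hconj (O η) ζ, ← hO ζ (O η),
      inner_conj_symm, hBclaim η ζ]
  exact ⟨O, hsa, hidem, htend⟩
end

section
/- With P_n and O_n as above, the identity O_n P_n = P_{n-1} holds; i.e., the projection onto vectors fixed by the group generated by (n, n+1)-conjugates, namely S(n,n,∞)-fixed vectors, coincides with the projection onto S(n−1,∞)-fixed vectors. -/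
set_option maxHeartbeats 2000000

open MeasureTheory Filter Topology
open scoped InnerProductSpace


namespace S8

def sp (n m k : ℕ) : Equiv.Perm ℕ :=
  ((List.range k).map fun j => Equiv.swap (n + j) (n + m + j)).prod

lemma sp_succ (n m k : ℕ) :
    sp n m (k+1) = sp n m k * Equiv.swap (n+k) (n+m+k) := by
  unfold sp
  rw [List.range_succ, List.map_append, List.prod_append]
  simp

lemma sp_apply (n m : ℕ) : ∀ k, k ≤ m → ∀ x, sp n m k x =
    if n ≤ x ∧ x < n + k then x + m
    else if n + m ≤ x ∧ x < n + m + k then x - m else x := by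
  intro k
  induction k with
  | zero =>
      intro _ x
      simp only [sp, List.range_zero, List.map_nil, List.prod_nil, Equiv.Perm.coe_one, id_eq]
      split_ifs <;> omega
  | succ k ih =>
      intro hk x
      rw [sp_succ, Equiv.Perm.mul_apply]
      rcases eq_or_ne x (n+k) with rfl | h1
      · rw [Equiv.swap_apply_left, ih (by omega)]
        split_ifs <;> omega
      rcases eq_or_ne x (n+m+k) with rfl | h2
      · rw [Equiv.swap_apply_right, ih (by omega)]
        split_ifs <;> omega
      · rw [Equiv.swap_apply_of_ne_of_ne h1 h2, ih (by omega)]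
        split_ifs <;> omega

lemma sigma_apply (n m x : ℕ) : sigmaPerm n m x =
    if n ≤ x ∧ x < n + m then x + m
    else if n + m ≤ x ∧ x < n + m + m then x - m else x := by
  have : sigmaPerm n m = sp n m m := rfl
  rw [this, sp_apply n m m le_rfl]

def cyc (a m : ℕ) : Equiv.Perm ℕ :=
  ((List.range m).map fun j => Equiv.swap (a + j) (a + j + 1)).prod

lemma cyc_succ (a m : ℕ) : cyc a (m+1) = cyc a m * Equiv.swap (a+m) (a+m+1) := by
  unfold cyc
  rw [List.range_succ, List.map_append, List.prod_append]
  simp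

lemma cyc_apply (a : ℕ) : ∀ m x, cyc a m x =
    if a ≤ x ∧ x < a + m then x + 1 else if x = a + m then a else x := by
  intro m
  induction m with
  | zero =>
      intro x
      simp only [cyc, List.range_zero, List.map_nil, List.prod_nil, Equiv.Perm.coe_one, id_eq]
      split_ifs <;> omega
  | succ m ih =>
      intro x
      rw [cyc_succ, Equiv.Perm.mul_apply]
      rcases eq_or_ne x (a+m) with rfl | h1
      · rw [Equiv.swap_apply_left, ih]
        split_ifs <;> omega
      rcases eq_or_ne x (a+m+1) with rfl | h2
      · rw [Equiv.swap_apply_right, ih]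
        split_ifs <;> omega
      · rw [Equiv.swap_apply_of_ne_of_ne h1 h2, ih]
        split_ifs <;> omega

lemma mem_stab {k : ℕ} {s : Equiv.Perm ℕ} : s ∈ stabSet k ↔ ∀ i < k, s i = i := Iff.rfl

lemma stab_mono {j k : ℕ} (h : j ≤ k) : stabSet k ⊆ stabSet j :=
  fun s hs i hi => hs i (lt_of_lt_of_le hi h)

lemma inv_mem_stab {k : ℕ} {c : Equiv.Perm ℕ} (hc : c ∈ stabSet k) : c⁻¹ ∈ stabSet k := by
  intro i hi
  conv_lhs => rw [← hc i hi]
  exact Equiv.symm_apply_apply c i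

lemma cyc_mem_stab (a m k : ℕ) (hk : k ≤ a) : cyc a m ∈ stabSet k := by
  intro i hi
  rw [cyc_apply]
  split_ifs <;> omega

set_option maxHeartbeats 2000000 in
lemma key_identity (p m : ℕ) :
    sigmaPerm p (m+1) =
      cyc (p+1+m) m * (Equiv.swap p (p+1+2*m) * sigmaPerm (p+1) m) * (cyc (p+1+m) m)⁻¹ := by
  have h : sigmaPerm p (m+1) * cyc (p+1+m) m
      = cyc (p+1+m) m * (Equiv.swap p (p+1+2*m) * sigmaPerm (p+1) m) := by
    ext x
    simp only [Equiv.Perm.mul_apply, sigma_apply, cyc_apply, Equiv.swap_apply_def]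
    split_ifs <;> omega
  rw [← h, mul_inv_cancel_right]

set_option maxHeartbeats 2000000 in
lemma key_identity2 (p m N : ℕ) (hN : p+1+2*m < N) :
    Equiv.swap (p+1+2*m) N * (Equiv.swap p (p+1+2*m) * sigmaPerm (p+1) m)
        * (Equiv.swap (p+1+2*m) N)⁻¹
      = Equiv.swap p N * sigmaPerm (p+1) m := by
  rw [Equiv.swap_inv]
  ext x
  simp only [Equiv.Perm.mul_apply, sigma_apply, Equiv.swap_apply_def]
  split_ifs <;> omega



variable {H : Type*} [NormedAddCommGroup H] [InnerProductSpace ℂ H] [CompleteSpace H]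
  (K : Equiv.Perm ℕ →* (H →L[ℂ] H))

lemma K_inner (hunit : ∀ g (η : H), ‖K g η‖ = ‖η‖) (g : Equiv.Perm ℕ) (ξ ζ : H) :
    ⟪K g ξ, K g ζ⟫_ℂ = ⟪ξ, ζ⟫_ℂ :=
  (⟨(K g).toLinearMap, hunit g⟩ : H →ₗᵢ[ℂ] H).inner_map_map ξ ζ

lemma K_apply_inv (g : Equiv.Perm ℕ) (ζ : H) : K g (K g⁻¹ ζ) = ζ := by
  rw [← ContinuousLinearMap.mul_apply, ← map_mul]
  simp

lemma K_adj (hunit : ∀ g (η : H), ‖K g η‖ = ‖η‖) (g : Equiv.Perm ℕ) (ξ ζ : H) :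
    ⟪K g ξ, ζ⟫_ℂ = ⟪ξ, K g⁻¹ ζ⟫_ℂ := by
  conv_lhs => rw [← K_apply_inv K g ζ]
  rw [K_inner K hunit]

lemma conj_est (hunit : ∀ g (η : H), ‖K g η‖ = ‖η‖) (c g : Equiv.Perm ℕ) (η ζ : H) :
    ‖⟪K (c * g * c⁻¹) η, ζ⟫_ℂ - ⟪K g η, ζ⟫_ℂ‖
      ≤ ‖K c⁻¹ η - η‖ * ‖ζ‖ + ‖η‖ * ‖K c⁻¹ ζ - ζ‖ := by
  have h1 : ⟪K (c * g * c⁻¹) η, ζ⟫_ℂ = ⟪K g (K c⁻¹ η), K c⁻¹ ζ⟫_ℂ := by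
    rw [map_mul, map_mul, ContinuousLinearMap.mul_apply, ContinuousLinearMap.mul_apply,
      K_adj K hunit]
  rw [h1]
  have h2 : ⟪K g (K c⁻¹ η), K c⁻¹ ζ⟫_ℂ - ⟪K g η, ζ⟫_ℂ
      = ⟪K g (K c⁻¹ η - η), K c⁻¹ ζ⟫_ℂ + ⟪K g η, K c⁻¹ ζ - ζ⟫_ℂ := by
    simp only [map_sub, inner_sub_left, inner_sub_right]
    ring
  rw [h2]
  refine (norm_add_le _ _).trans (add_le_add ?_ ?_)
  · exact (norm_inner_le_norm _ _).trans (le_of_eq (by rw [hunit, hunit]))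
  · exact (norm_inner_le_norm _ _).trans (le_of_eq (by rw [hunit]))


end S8

open S8

/-- `O_n · P_n = P_{n-1}`: the product of the projection `P_n` onto the
`S(n,∞)`-fixed vectors with `O_n = weak-lim_N K((n,N))` (in 0-based indexing the point
`n` of the paper is the index `n-1`) equals the projection onto the
`S(n-1,∞)`-fixed vectors. -/
theorem statement8
    {H : Type*} [NormedAddCommGroup H] [InnerProductSpace ℂ H] [CompleteSpace H]
    (K : Equiv.Perm ℕ →* (H →L[ℂ] H))
    (hunit : ∀ g (η : H), ‖K g η‖ = ‖η‖)
    (hcont : ∀ (η : H) (ε : ℝ), 0 < ε → ∃ k : ℕ, ∀ s ∈ stabSet k, ‖K s η - η‖ < ε)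
    (n : ℕ) (hn : 1 ≤ n) (P P' O : H →L[ℂ] H)
    (hP : ∀ η ζ : H, Tendsto (fun m => ⟪K (sigmaPerm n m) η, ζ⟫_ℂ) atTop (𝓝 ⟪P η, ζ⟫_ℂ))
    (hP' : ∀ η ζ : H,
      Tendsto (fun m => ⟪K (sigmaPerm (n - 1) m) η, ζ⟫_ℂ) atTop (𝓝 ⟪P' η, ζ⟫_ℂ))
    (hO : ∀ η ζ : H,
      Tendsto (fun N => ⟪K (Equiv.swap (n - 1) N) η, ζ⟫_ℂ) atTop (𝓝 ⟪O η, ζ⟫_ℂ)) :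
    O.comp P = P' := by
  obtain ⟨p, rfl⟩ : ∃ p, n = p + 1 := ⟨n - 1, by omega⟩
  simp only [Nat.add_sub_cancel] at hP' hO
  ext η
  refine ext_inner_right ℂ fun ζ => ?_
  rw [ContinuousLinearMap.comp_apply]
  -- error terms tend to zero
  have herr : ∀ (ξ : H) (c : ℕ → Equiv.Perm ℕ), (∀ m, c m ∈ stabSet m) →
      Tendsto (fun m => ‖K (c m) ξ - ξ‖) atTop (𝓝 0) := by
    intro ξ c hc
    rw [Metric.tendsto_atTop]
    intro ε hε
    obtain ⟨k, hk⟩ := hcont ξ ε hε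
    refine ⟨k, fun m hm => ?_⟩
    have hmem : c m ∈ stabSet k := stab_mono hm (hc m)
    simpa [Real.dist_eq, abs_of_nonneg (norm_nonneg _)] using hk _ hmem
  -- Part 1 : F - A → 0
  have h1 : Tendsto (fun m => ⟪K (sigmaPerm p (m+1)) η, ζ⟫_ℂ
      - ⟪K (Equiv.swap p (p+1+2*m) * sigmaPerm (p+1) m) η, ζ⟫_ℂ) atTop (𝓝 0) := by
    have hmem : ∀ m, (cyc (p+1+m) m)⁻¹ ∈ stabSet m :=
      fun m => inv_mem_stab (cyc_mem_stab (p+1+m) m m (by omega))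
    have e1 := herr η (fun m => (cyc (p+1+m) m)⁻¹) hmem
    have e2 := herr ζ (fun m => (cyc (p+1+m) m)⁻¹) hmem
    have htend : Tendsto (fun m =>
        ‖K (cyc (p+1+m) m)⁻¹ η - η‖ * ‖ζ‖ + ‖η‖ * ‖K (cyc (p+1+m) m)⁻¹ ζ - ζ‖)
        atTop (𝓝 0) := by
      simpa using (e1.mul_const ‖ζ‖).add (e2.const_mul ‖η‖)
    refine squeeze_zero_norm (fun m => ?_) htend
    rw [key_identity p m]
    exact conj_est K hunit _ _ η ζ
  -- Part 2 : C → L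
  have h2 : Tendsto (fun m => ⟪K (sigmaPerm (p+1) m) η, (ContinuousLinearMap.adjoint O) ζ⟫_ℂ)
      atTop (𝓝 ⟪O (P η), ζ⟫_ℂ) := by
    have := hP η ((ContinuousLinearMap.adjoint O) ζ)
    rwa [ContinuousLinearMap.adjoint_inner_right] at this
  -- Part 3 : A - C → 0
  have h3 : Tendsto (fun m => ⟪K (Equiv.swap p (p+1+2*m) * sigmaPerm (p+1) m) η, ζ⟫_ℂ
      - ⟪K (sigmaPerm (p+1) m) η, (ContinuousLinearMap.adjoint O) ζ⟫_ℂ) atTop (𝓝 0) := by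
    rw [Metric.tendsto_atTop]
    intro ε hε
    have hBpos : (0:ℝ) < 2 * (‖η‖ + ‖ζ‖ + 1) := by positivity
    have hδ : (0:ℝ) < ε / (2 * (‖η‖ + ‖ζ‖ + 1)) := by positivity
    obtain ⟨k1, hk1⟩ := hcont η _ hδ
    obtain ⟨k2, hk2⟩ := hcont ζ _ hδ
    refine ⟨k1 + k2, fun m hm => ?_⟩
    set δ := ε / (2 * (‖η‖ + ‖ζ‖ + 1)) with hδdef
    -- limit over N of the inner products
    have hlim0 : Tendsto (fun N => ⟪K (Equiv.swap p N * sigmaPerm (p+1) m) η, ζ⟫_ℂ)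
        atTop (𝓝 ⟪K (sigmaPerm (p+1) m) η, (ContinuousLinearMap.adjoint O) ζ⟫_ℂ) := by
      have h0 := hO (K (sigmaPerm (p+1) m) η) ζ
      rw [← ContinuousLinearMap.adjoint_inner_right] at h0
      refine h0.congr fun N => ?_
      rw [map_mul, ContinuousLinearMap.mul_apply]
    have hlim := (hlim0.sub_const
        (⟪K (Equiv.swap p (p+1+2*m) * sigmaPerm (p+1) m) η, ζ⟫_ℂ)).norm
    have hbd : ∀ᶠ N in atTop,
        ‖⟪K (Equiv.swap p N * sigmaPerm (p+1) m) η, ζ⟫_ℂ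
          - ⟪K (Equiv.swap p (p+1+2*m) * sigmaPerm (p+1) m) η, ζ⟫_ℂ‖
        ≤ δ * ‖ζ‖ + ‖η‖ * δ := by
      filter_upwards [eventually_gt_atTop (p+1+2*m)] with N hN
      rw [← key_identity2 p m N hN]
      refine (conj_est K hunit _ _ η ζ).trans ?_
      rw [Equiv.swap_inv]
      have hdmem1 : Equiv.swap (p+1+2*m) N ∈ stabSet k1 := by
        intro i hi
        apply Equiv.swap_apply_of_ne_of_ne <;> omega
      have hdmem2 : Equiv.swap (p+1+2*m) N ∈ stabSet k2 := by
        intro i hi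
        apply Equiv.swap_apply_of_ne_of_ne <;> omega
      exact add_le_add (mul_le_mul_of_nonneg_right (le_of_lt (hk1 _ hdmem1)) (norm_nonneg ζ))
        (mul_le_mul_of_nonneg_left (le_of_lt (hk2 _ hdmem2)) (norm_nonneg η))
    have hfin : ‖⟪K (sigmaPerm (p+1) m) η, (ContinuousLinearMap.adjoint O) ζ⟫_ℂ
        - ⟪K (Equiv.swap p (p+1+2*m) * sigmaPerm (p+1) m) η, ζ⟫_ℂ‖ ≤ δ * ‖ζ‖ + ‖η‖ * δ :=
      le_of_tendsto hlim hbd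
    rw [dist_zero_right, norm_sub_rev]
    refine lt_of_le_of_lt hfin ?_
    have : δ * ‖ζ‖ + ‖η‖ * δ = δ * (‖η‖ + ‖ζ‖) := by ring
    rw [this, hδdef, div_mul_eq_mul_div, div_lt_iff₀ hBpos]
    nlinarith [norm_nonneg η, norm_nonneg ζ]
  -- combine
  have hF2 : Tendsto (fun m => ⟪K (sigmaPerm p (m+1)) η, ζ⟫_ℂ) atTop (𝓝 ⟪O (P η), ζ⟫_ℂ) := by
    have h4 := (h1.add h3).add h2
    rw [zero_add, zero_add] at h4
    exact h4.congr fun m => by ring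
  have hF1 : Tendsto (fun m => ⟪K (sigmaPerm p (m+1)) η, ζ⟫_ℂ) atTop (𝓝 ⟪P' η, ζ⟫_ℂ) :=
    (hP' η ζ).comp (tendsto_add_atTop_nat 1)
  exact tendsto_nhds_unique hF2 hF1
end

section
/- For a continuous unitary representation K of S̄∞ on a Hilbert space H, the projections P_k converge strongly to the identity operator as k → ∞: for each η ∈ H, ‖P_k η − η‖ → 0. -/
open MeasureTheory Filter Topology
open scoped InnerProductSpace

/-- the projections `P_k` onto the `S(k,∞)`-fixed vectors converge
strongly to the identity operator. -/
theorem statement10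
    {H : Type*} [NormedAddCommGroup H] [InnerProductSpace ℂ H] [CompleteSpace H]
    (K : Equiv.Perm ℕ →* (H →L[ℂ] H))
    (hunit : ∀ g (η : H), ‖K g η‖ = ‖η‖)
    (hcont : ∀ (η : H) (ε : ℝ), 0 < ε → ∃ k : ℕ, ∀ s ∈ stabSet k, ‖K s η - η‖ < ε)
    (P : ℕ → (H →L[ℂ] H))
    (hsa : ∀ k, IsSelfAdjoint (P k)) (hidem : ∀ k, (P k).comp (P k) = P k)
    (hrange : ∀ k, Set.range (P k) = {η : H | ∀ s ∈ stabSet k, K s η = η}) :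
    ∀ η : H, Tendsto (fun k => ‖P k η - η‖) atTop (𝓝 0) := by
  intro η
  rw [Metric.tendsto_atTop]
  intro ε hε
  obtain ⟨k, hk⟩ := hcont η (ε / 2) (by positivity)
  refine ⟨k, fun n hn => ?_⟩
  have horb : ∀ s ∈ stabSet n, ‖K s η - η‖ ≤ ε / 2 := fun s hs =>
    (hk s fun i hi => hs i (lt_of_lt_of_le hi hn)).le
  -- the orbit of η under the stabilizer S(n,∞)
  set O : Set H := (fun s : Equiv.Perm ℕ => K s η) '' stabSet n with hOdef
  set C : Set H := closure (convexHull ℝ O) with hCdef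
  have hone : (1 : Equiv.Perm ℕ) ∈ stabSet n := fun i _ => rfl
  have hηO : η ∈ O := ⟨1, hone, by simp⟩
  have hCconv : Convex ℝ C := (convex_convexHull ℝ O).closure
  have hCclosed : IsClosed C := isClosed_closure
  have hCne : C.Nonempty := ⟨η, subset_closure (subset_convexHull ℝ O hηO)⟩
  have hmul : ∀ s ∈ stabSet n, ∀ t ∈ stabSet n, s * t ∈ stabSet n := by
    intro s hs t ht i hi
    rw [Equiv.Perm.mul_apply, ht i hi, hs i hi]
  -- C is invariant under K s for s in the stabilizer
  have hinv : ∀ s ∈ stabSet n, ∀ x ∈ C, K s x ∈ C := by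
    intro s hs
    have hOsub : O ⊆ (fun x => K s x) ⁻¹' C := by
      rintro _ ⟨t, ht, rfl⟩
      have : K s (K t η) = K (s * t) η := by rw [map_mul]; rfl
      rw [Set.mem_preimage, this]
      exact subset_closure (subset_convexHull ℝ O ⟨s * t, hmul s hs t ht, rfl⟩)
    have hpreconv : Convex ℝ ((fun x => K s x) ⁻¹' C) :=
      hCconv.linear_preimage (((K s).toLinearMap).restrictScalars ℝ)
    have hpreclosed : IsClosed ((fun x => K s x) ⁻¹' C) :=
      hCclosed.preimage (K s).continuous
    intro x hx
    exact closure_minimal (convexHull_min hOsub hpreconv) hpreclosed hx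
  -- C is contained in the closed ball of radius ε/2 around η
  have hCball : C ⊆ Metric.closedBall η (ε / 2) := by
    have hOball : O ⊆ Metric.closedBall η (ε / 2) := by
      rintro _ ⟨s, hs, rfl⟩
      simpa [Metric.mem_closedBall, dist_eq_norm] using horb s hs
    exact closure_minimal (convexHull_min hOball (convex_closedBall η (ε / 2)))
      Metric.isClosed_closedBall
  -- minimal norm element of C
  letI : InnerProductSpace ℝ H := InnerProductSpace.complexToReal
  obtain ⟨v, hvC, hvmin⟩ :=
    exists_norm_eq_iInf_of_complete_convex hCne hCclosed.isComplete hCconv (0 : H)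
  have hδ_le : ∀ w ∈ C, ‖v‖ ≤ ‖w‖ := by
    intro w hw
    have h1 : (⨅ w : C, ‖(0 : H) - w‖) ≤ ‖(0 : H) - w‖ := by
      apply ciInf_le _ (⟨w, hw⟩ : C)
      exact ⟨0, by rintro _ ⟨w', rfl⟩; exact norm_nonneg _⟩
    calc ‖v‖ = ‖(0 : H) - v‖ := by simp
    _ = ⨅ w : C, ‖(0 : H) - w‖ := hvmin
    _ ≤ ‖(0 : H) - w‖ := h1
    _ = ‖w‖ := by simp
  -- the minimal norm element is fixed by the stabilizer
  have hfix : ∀ s ∈ stabSet n, K s v = v := by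
    intro s hs
    have h1 : K s v ∈ C := hinv s hs v hvC
    have hnorm : ‖K s v‖ = ‖v‖ := hunit s v
    set m : H := (1 / 2 : ℝ) • v + (1 / 2 : ℝ) • K s v with hm
    have hmC : m ∈ C := hCconv hvC h1 (by norm_num) (by norm_num) (by norm_num)
    have hm2 : ‖v + K s v‖ = 2 * ‖m‖ := by
      rw [hm, ← smul_add, norm_smul]
      simp
    have hpar := parallelogram_law_with_norm ℂ v (K s v)
    have hvm : ‖v‖ ≤ ‖m‖ := hδ_le m hmC
    have ht : ‖v - K s v‖ * ‖v - K s v‖ ≤ 0 := by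
      nlinarith [norm_nonneg v, norm_nonneg m]
    have hz : ‖v - K s v‖ = 0 :=
      mul_self_eq_zero.mp (le_antisymm ht (mul_self_nonneg _))
    exact (sub_eq_zero.mp (norm_eq_zero.mp hz)).symm
  -- hence v is in the range of P n, and P n v = v
  have hvr : v ∈ Set.range (P n) := by rw [hrange n]; exact hfix
  obtain ⟨w, hw⟩ := hvr
  have hPv : P n v = v := by
    rw [← hw]
    have := DFunLike.congr_fun (hidem n) w
    simpa using this
  -- distance from v to η
  have hvball : ‖v - η‖ ≤ ε / 2 := by
    have := hCball hvC
    rwa [Metric.mem_closedBall, dist_eq_norm] at this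
  -- closest point property: ‖P n η - η‖ ≤ ‖v - η‖
  have hPP : P n (P n η - η) = 0 := by
    have h1 : P n (P n η) = P n η := by
      have := DFunLike.congr_fun (hidem n) η
      simpa using this
    rw [map_sub, h1, sub_self]
  have horth : (inner ℂ (P n (v - η)) (P n η - η) : ℂ) = 0 := by
    have h2 := (hsa n).isSymmetric (v - η) (P n η - η)
    simpa only [ContinuousLinearMap.coe_coe, hPP, inner_zero_right] using h2
  have hdecomp : v - η = P n (v - η) + (P n η - η) := by
    rw [map_sub, hPv]
    abel
  have hkey : ‖P n η - η‖ ≤ ‖v - η‖ := by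
    have hsq : ‖v - η‖ ^ 2 = ‖P n (v - η)‖ ^ 2 + 2 * (RCLike.re (inner ℂ (P n (v - η)) (P n η - η) : ℂ)) + ‖P n η - η‖ ^ 2 := by
      conv_lhs => rw [hdecomp]
      exact norm_add_sq _ _
    rw [horth] at hsq
    simp only [map_zero, mul_zero, add_zero] at hsq
    nlinarith [norm_nonneg (P n (v - η)), norm_nonneg (P n η - η), norm_nonneg (v - η)]
  have hfinal : ‖P n η - η‖ ≤ ε / 2 := hkey.trans hvball
  rw [Real.dist_eq, sub_zero, abs_of_nonneg (norm_nonneg _)]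
  linarith
end

section
/- Let G be a group, H ≤ G a subgroup, and suppose G acts on the right on a measure space X. Let E ⊆ X be measurable with μ(E Δ Es) = 0 for all s ∈ H and μ((Eg) ∩ E) = 0 for all g ∉ H, and let μ_E be a finite H-invariant measure supported on E. Choose representatives r(z) ∈ G for each right coset z ∈ H\G (countably many). Then the measure ν(Y) = Σ_{z ∈ H\G} μ_E((Y ∩ E·r(z))·r(z)⁻¹) defined on A = ∪_z E·r(z) is G-invariant: ν(Yg) = ν(Y) for all g ∈ G and measurable Y ⊆ A. -/
open MeasureTheory Filter Topology
open scoped symmDiff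

/-- extension of a finite `H`-invariant measure on `E` to a `G`-invariant
measure on `A = ⋃_z E·r(z)`, where `r` is a section of the right cosets `H\G` and the
translates of `E` by elements outside `H` are `μ_E`-almost disjoint from `E`. The extension
`ν(Y) = Σ_z μ_E((Y ∩ E·r(z))·r(z)⁻¹)` satisfies `ν(Yg) = ν(Y)`. -/
theorem statement16
    {X : Type*} [MeasurableSpace X]
    {G : Type*} [Group G] (H : Subgroup G)
    [Countable (Quotient (QuotientGroup.rightRel H))]
    (T : G → X ≃ᵐ X)
    (hT1 : T 1 = MeasurableEquiv.refl X)
    (hTmul : ∀ g h : G, T (g * h) = (T g).trans (T h))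
    (E : Set X) (hE : MeasurableSet E)
    (μE : MeasureTheory.Measure X) [MeasureTheory.IsFiniteMeasure μE]
    (hsupp : μE Eᶜ = 0)
    (hEfix : ∀ s ∈ H, μE (E ∆ (T s '' E)) = 0)
    (hdisj : ∀ g ∉ H, μE ((T g '' E) ∩ E) = 0)
    (hinv : ∀ s ∈ H, ∀ Y : Set X, MeasurableSet Y → Y ⊆ E → μE (T s '' Y) = μE Y)
    (r : Quotient (QuotientGroup.rightRel H) → G)
    (hr : ∀ z, Quotient.mk (QuotientGroup.rightRel H) (r z) = z)
    (hr1 : r (Quotient.mk (QuotientGroup.rightRel H) 1) = 1) :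
    ∀ g : G, ∀ Y : Set X, MeasurableSet Y → Y ⊆ ⋃ z, T (r z) '' E →
      (∑' z, μE (T (r z)⁻¹ '' ((T g '' Y) ∩ (T (r z) '' E)))) =
        ∑' z, μE (T (r z)⁻¹ '' (Y ∩ (T (r z) '' E))) := by
  intro g Y hY _hYA
  -- composition of images
  have himg : ∀ (a b : G) (S : Set X), T b '' (T a '' S) = T (a * b) '' S := by
    intro a b S
    rw [hTmul, MeasurableEquiv.coe_trans, Set.image_comp]
  have hid : ∀ S : Set X, T 1 '' S = S := by
    intro S; rw [hT1]; simp
  have hsplitimg : ∀ (c : G) (A B : Set X), T c '' (A ∩ B) = T c '' A ∩ T c '' B := by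
    intro c A B
    exact Set.image_inter (T c).injective
  -- key measure lemma
  have kl : ∀ s ∈ H, ∀ Z : Set X, MeasurableSet Z → μE (T s '' Z ∩ E) = μE (Z ∩ E) := by
    intro s hs Z hZ
    have hnull : μE (E ∆ (T s '' E)) = 0 := hEfix s hs
    have h1 : μE (T s '' (Z ∩ E) ∩ E) = μE (Z ∩ E) := by
      have hdiff : μE (T s '' (Z ∩ E) \ E) = 0 := by
        refine measure_mono_null ?_ hnull
        intro x hx
        rw [Set.mem_symmDiff]
        exact Or.inr ⟨Set.image_mono Set.inter_subset_right hx.1, hx.2⟩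
      have h := measure_inter_add_diff (μ := μE) (T s '' (Z ∩ E)) hE
      rw [hdiff, add_zero] at h
      rw [h, hinv s hs (Z ∩ E) (hZ.inter hE) Set.inter_subset_right]
    have h2 : μE (T s '' (Z \ E) ∩ E) = 0 := by
      refine measure_mono_null ?_ hnull
      intro x hx
      rw [Set.mem_symmDiff]
      have hco : (T s) '' (Z \ E) ⊆ ((T s) '' E)ᶜ := by
        rw [← Set.image_compl_eq (T s).bijective]
        exact Set.image_mono (fun y hy => hy.2)
      exact Or.inl ⟨hx.2, hco hx.1⟩
    refine le_antisymm ?_ ?_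
    · have hsplit : T s '' Z ∩ E ⊆ (T s '' (Z ∩ E) ∩ E) ∪ (T s '' (Z \ E) ∩ E) := by
        intro x hx
        have hZu : Z = (Z ∩ E) ∪ (Z \ E) := (Set.inter_union_diff Z E).symm
        rw [hZu, Set.image_union] at hx
        rcases hx.1 with h | h
        · exact Or.inl ⟨h, hx.2⟩
        · exact Or.inr ⟨h, hx.2⟩
      calc μE (T s '' Z ∩ E) ≤ μE ((T s '' (Z ∩ E) ∩ E) ∪ (T s '' (Z \ E) ∩ E)) :=
            measure_mono hsplit
        _ ≤ μE (T s '' (Z ∩ E) ∩ E) + μE (T s '' (Z \ E) ∩ E) := measure_union_le _ _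
        _ = μE (Z ∩ E) := by rw [h1, h2, add_zero]
    · rw [← h1]
      exact measure_mono (Set.inter_subset_inter_left _
        (Set.image_mono Set.inter_subset_left))
  -- translate each term into a normal form
  have hterm : ∀ (z : Quotient (QuotientGroup.rightRel H)) (S : Set X),
      T (r z)⁻¹ '' (S ∩ T (r z) '' E) = T (r z)⁻¹ '' S ∩ E := by
    intro z S
    rw [hsplitimg, himg, mul_inv_cancel, hid]
  -- the reindexing equivalence z ↦ z·g
  have hresp : ∀ (c a b : G), (QuotientGroup.rightRel H) a b →
      (QuotientGroup.rightRel H) (a * c) (b * c) := by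
    intro c a b hab
    rw [QuotientGroup.rightRel_apply] at hab ⊢
    have : b * c * (a * c)⁻¹ = b * a⁻¹ := by group
    rw [this]; exact hab
  let eg : Quotient (QuotientGroup.rightRel H) ≃ Quotient (QuotientGroup.rightRel H) :=
    { toFun := Quotient.map (· * g) (hresp g)
      invFun := Quotient.map (· * g⁻¹) (hresp g⁻¹)
      left_inv := by
        intro z; induction z using Quotient.inductionOn with
        | h a => simp
      right_inv := by
        intro z; induction z using Quotient.inductionOn with
        | h a => simp }
  -- key pointwise identity
  have hkey : ∀ z₀ : Quotient (QuotientGroup.rightRel H),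
      μE (T (g * (r (eg z₀))⁻¹) '' Y ∩ E) = μE (T (r z₀)⁻¹ '' Y ∩ E) := by
    intro z₀
    set z := eg z₀ with hz
    have hmk : Quotient.mk (QuotientGroup.rightRel H) (r z₀ * g) = z := by
      have : eg (Quotient.mk (QuotientGroup.rightRel H) (r z₀)) =
          Quotient.mk (QuotientGroup.rightRel H) (r z₀ * g) := rfl
      rw [← this, hr z₀]
    have hrel : (QuotientGroup.rightRel H) (r z₀ * g) (r z) := by
      exact Quotient.exact (hmk.trans (hr z).symm)
    have hsH : r z₀ * g * (r z)⁻¹ ∈ H := by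
      have := (QuotientGroup.rightRel_apply).mp hrel
      have h2 := H.inv_mem this
      simpa using h2
    set s := r z₀ * g * (r z)⁻¹ with hsdef
    have halg : g * (r z)⁻¹ = (r z₀)⁻¹ * s := by rw [hsdef]; group
    rw [halg, ← himg (r z₀)⁻¹ s Y,
      kl s hsH _ ((T (r z₀)⁻¹).measurableSet_image.mpr hY)]
  calc (∑' z, μE (T (r z)⁻¹ '' ((T g '' Y) ∩ (T (r z) '' E))))
      = ∑' z, μE (T (g * (r z)⁻¹) '' Y ∩ E) := by
        refine tsum_congr fun z => ?_
        rw [hterm, himg]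
    _ = ∑' z₀, μE (T (g * (r (eg z₀))⁻¹) '' Y ∩ E) := (Equiv.tsum_eq eg _).symm
    _ = ∑' z₀, μE (T (r z₀)⁻¹ '' Y ∩ E) := tsum_congr hkey
    _ = ∑' z, μE (T (r z)⁻¹ '' (Y ∩ (T (r z) '' E))) := by
        refine tsum_congr fun z => ?_
        rw [hterm]
end
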